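/- The orthogonal complement Ψ^⊥ of Ψ in Skew(4,ℝ) with respect to the form b₀(M,N) = (1/2)Tr(MΨNΨ) − (1/4)Tr(MΨ)Tr(NΨ) is a 5-dimensional subspace, and the restriction of b₀ to Ψ^⊥ is a nondegenerate quadratic form of signature (3,2). -/

import Mathlib

open Matrix

noncomputable def Psi : Matrix (Fin 4) (Fin 4) ℝ :=
  !![0,0,1,0; 0,0,0,1; -1,0,0,0; 0,-1,0,0]

noncomputable def b0 (M N : Matrix (Fin 4) (Fin 4) ℝ) : ℝ :=
  (1/2) * (M * Psi * N * Psi).trace - (1/4) * (M * Psi).trace * (N * Psi).trace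

noncomputable def g0 : Matrix (Fin 4) (Fin 4) ℝ := !![0,1,0,0;-1,0,0,0;0,0,0,1;0,0,-1,0]
noncomputable def g1 : Matrix (Fin 4) (Fin 4) ℝ := !![0,0,0,1;0,0,1,0;0,-1,0,0;-1,0,0,0]
noncomputable def g2 : Matrix (Fin 4) (Fin 4) ℝ := !![0,0,1,0;0,0,0,-1;-1,0,0,0;0,1,0,0]
noncomputable def g3 : Matrix (Fin 4) (Fin 4) ℝ := !![0,1,0,0;-1,0,0,0;0,0,0,-1;0,0,1,0]
noncomputable def g4 : Matrix (Fin 4) (Fin 4) ℝ := !![0,0,0,1;0,0,-1,0;0,1,0,0;-1,0,0,0]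

lemma bPsi (M : Matrix (Fin 4) (Fin 4) ℝ) (hs : ∀ i j, M j i = - M i j) :
    b0 M Psi = -(M 0 2 + M 1 3) := by
  simp [b0, Psi, Matrix.trace, Matrix.mul_apply, Fin.sum_univ_four, Matrix.diag,
    Matrix.vecHead, Matrix.vecTail, hs 0 1, hs 0 2, hs 0 3, hs 1 2, hs 1 3, hs 2 3]
  ring

lemma bg0 (M : Matrix (Fin 4) (Fin 4) ℝ) (hs : ∀ i j, M j i = - M i j) :
    b0 M g0 = M 0 1 + M 2 3 := by
  simp [b0, Psi, g0, Matrix.trace, Matrix.mul_apply, Fin.sum_univ_four, Matrix.diag,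
    Matrix.vecHead, Matrix.vecTail, hs 0 1, hs 0 2, hs 0 3, hs 1 2, hs 1 3, hs 2 3]
  ring

lemma bg1 (M : Matrix (Fin 4) (Fin 4) ℝ) (hs : ∀ i j, M j i = - M i j) :
    b0 M g1 = M 0 3 + M 1 2 := by
  simp [b0, Psi, g1, Matrix.trace, Matrix.mul_apply, Fin.sum_univ_four, Matrix.diag,
    Matrix.vecHead, Matrix.vecTail, hs 0 1, hs 0 2, hs 0 3, hs 1 2, hs 1 3, hs 2 3]
  ring

lemma bg2 (M : Matrix (Fin 4) (Fin 4) ℝ) (hs : ∀ i j, M j i = - M i j) :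
    b0 M g2 = M 0 2 - M 1 3 := by
  simp [b0, Psi, g2, Matrix.trace, Matrix.mul_apply, Fin.sum_univ_four, Matrix.diag,
    Matrix.vecHead, Matrix.vecTail, hs 0 1, hs 0 2, hs 0 3, hs 1 2, hs 1 3, hs 2 3]
  ring

lemma bg3 (M : Matrix (Fin 4) (Fin 4) ℝ) (hs : ∀ i j, M j i = - M i j) :
    b0 M g3 = M 2 3 - M 0 1 := by
  simp [b0, Psi, g3, Matrix.trace, Matrix.mul_apply, Fin.sum_univ_four, Matrix.diag,
    Matrix.vecHead, Matrix.vecTail, hs 0 1, hs 0 2, hs 0 3, hs 1 2, hs 1 3, hs 2 3]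
  ring

lemma bg4 (M : Matrix (Fin 4) (Fin 4) ℝ) (hs : ∀ i j, M j i = - M i j) :
    b0 M g4 = M 1 2 - M 0 3 := by
  simp [b0, Psi, g4, Matrix.trace, Matrix.mul_apply, Fin.sum_univ_four, Matrix.diag,
    Matrix.vecHead, Matrix.vecTail, hs 0 1, hs 0 2, hs 0 3, hs 1 2, hs 1 3, hs 2 3]
  ring

lemma hsg0 : ∀ i j, g0 j i = - g0 i j := by
  intro i j; fin_cases i <;> fin_cases j <;> norm_num [Matrix.vecHead, Matrix.vecTail, g0]
lemma hsg1 : ∀ i j, g1 j i = - g1 i j := by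
  intro i j; fin_cases i <;> fin_cases j <;> norm_num [Matrix.vecHead, Matrix.vecTail, g1]
lemma hsg2 : ∀ i j, g2 j i = - g2 i j := by
  intro i j; fin_cases i <;> fin_cases j <;> norm_num [Matrix.vecHead, Matrix.vecTail, g2]
lemma hsg3 : ∀ i j, g3 j i = - g3 i j := by
  intro i j; fin_cases i <;> fin_cases j <;> norm_num [Matrix.vecHead, Matrix.vecTail, g3]
lemma hsg4 : ∀ i j, g4 j i = - g4 i j := by
  intro i j; fin_cases i <;> fin_cases j <;> norm_num [Matrix.vecHead, Matrix.vecTail, g4]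

lemma skew_of (M : Matrix (Fin 4) (Fin 4) ℝ) (h : ∀ i j, M j i = - M i j) : Mᵀ = -M := by
  ext i j; simp [Matrix.transpose_apply, h i j]

set_option maxHeartbeats 2000000 in
/-- Ψ^⊥ ⊂ Skew(4,ℝ) is 5-dimensional and b₀ restricted to it is
nondegenerate of signature (3,2): there is an orthogonal basis f₀,…,f₄ of Ψ^⊥
with b₀(fᵢ,fᵢ) > 0 for i < 3 and b₀(fᵢ,fᵢ) < 0 for i ≥ 3. -/
theorem psiPerp_dim_five_signature_three_two :
    (∀ M : Matrix (Fin 4) (Fin 4) ℝ, Mᵀ = -M → b0 M Psi = 0 →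
      (∀ N : Matrix (Fin 4) (Fin 4) ℝ, Nᵀ = -N → b0 N Psi = 0 → b0 M N = 0) → M = 0) ∧
    ∃ f : Fin 5 → Matrix (Fin 4) (Fin 4) ℝ,
      (∀ i, (f i)ᵀ = -(f i) ∧ b0 (f i) Psi = 0) ∧
      LinearIndependent ℝ f ∧
      (∀ M : Matrix (Fin 4) (Fin 4) ℝ, Mᵀ = -M → b0 M Psi = 0 →
        M ∈ Submodule.span ℝ (Set.range f)) ∧
      (∀ i j, i ≠ j → b0 (f i) (f j) = 0) ∧
      (∀ i : Fin 5, (i : ℕ) < 3 → 0 < b0 (f i) (f i)) ∧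
      (∀ i : Fin 5, 3 ≤ (i : ℕ) → b0 (f i) (f i) < 0) := by
  have hskew_iff : ∀ (M : Matrix (Fin 4) (Fin 4) ℝ), Mᵀ = -M → ∀ i j, M j i = - M i j := by
    intro M h i j
    have := congrFun (congrFun h i) j
    simpa using this
  have hg0Psi : b0 g0 Psi = 0 := by rw [bPsi g0 hsg0]; norm_num [Matrix.vecHead, Matrix.vecTail, g0, Matrix.cons_val_three, Matrix.cons_val_two]
  have hg1Psi : b0 g1 Psi = 0 := by rw [bPsi g1 hsg1]; norm_num [Matrix.vecHead, Matrix.vecTail, g1, Matrix.cons_val_three, Matrix.cons_val_two]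
  have hg2Psi : b0 g2 Psi = 0 := by rw [bPsi g2 hsg2]; norm_num [Matrix.vecHead, Matrix.vecTail, g2, Matrix.cons_val_three, Matrix.cons_val_two]
  have hg3Psi : b0 g3 Psi = 0 := by rw [bPsi g3 hsg3]; norm_num [Matrix.vecHead, Matrix.vecTail, g3, Matrix.cons_val_three, Matrix.cons_val_two]
  have hg4Psi : b0 g4 Psi = 0 := by rw [bPsi g4 hsg4]; norm_num [Matrix.vecHead, Matrix.vecTail, g4, Matrix.cons_val_three, Matrix.cons_val_two]
  have v00 : b0 g0 g0 = 2 := by rw [bg0 g0 hsg0]; norm_num [Matrix.vecHead, Matrix.vecTail, g0, Matrix.cons_val_three, Matrix.cons_val_two]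
  have v01 : b0 g0 g1 = 0 := by rw [bg1 g0 hsg0]; norm_num [Matrix.vecHead, Matrix.vecTail, g0, Matrix.cons_val_three, Matrix.cons_val_two]
  have v02 : b0 g0 g2 = 0 := by rw [bg2 g0 hsg0]; norm_num [Matrix.vecHead, Matrix.vecTail, g0, Matrix.cons_val_three, Matrix.cons_val_two]
  have v03 : b0 g0 g3 = 0 := by rw [bg3 g0 hsg0]; norm_num [Matrix.vecHead, Matrix.vecTail, g0, Matrix.cons_val_three, Matrix.cons_val_two]
  have v04 : b0 g0 g4 = 0 := by rw [bg4 g0 hsg0]; norm_num [Matrix.vecHead, Matrix.vecTail, g0, Matrix.cons_val_three, Matrix.cons_val_two]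
  have v10 : b0 g1 g0 = 0 := by rw [bg0 g1 hsg1]; norm_num [Matrix.vecHead, Matrix.vecTail, g1, Matrix.cons_val_three, Matrix.cons_val_two]
  have v11 : b0 g1 g1 = 2 := by rw [bg1 g1 hsg1]; norm_num [Matrix.vecHead, Matrix.vecTail, g1, Matrix.cons_val_three, Matrix.cons_val_two]
  have v12 : b0 g1 g2 = 0 := by rw [bg2 g1 hsg1]; norm_num [Matrix.vecHead, Matrix.vecTail, g1, Matrix.cons_val_three, Matrix.cons_val_two]
  have v13 : b0 g1 g3 = 0 := by rw [bg3 g1 hsg1]; norm_num [Matrix.vecHead, Matrix.vecTail, g1, Matrix.cons_val_three, Matrix.cons_val_two]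
  have v14 : b0 g1 g4 = 0 := by rw [bg4 g1 hsg1]; norm_num [Matrix.vecHead, Matrix.vecTail, g1, Matrix.cons_val_three, Matrix.cons_val_two]
  have v20 : b0 g2 g0 = 0 := by rw [bg0 g2 hsg2]; norm_num [Matrix.vecHead, Matrix.vecTail, g2, Matrix.cons_val_three, Matrix.cons_val_two]
  have v21 : b0 g2 g1 = 0 := by rw [bg1 g2 hsg2]; norm_num [Matrix.vecHead, Matrix.vecTail, g2, Matrix.cons_val_three, Matrix.cons_val_two]
  have v22 : b0 g2 g2 = 2 := by rw [bg2 g2 hsg2]; norm_num [Matrix.vecHead, Matrix.vecTail, g2, Matrix.cons_val_three, Matrix.cons_val_two]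
  have v23 : b0 g2 g3 = 0 := by rw [bg3 g2 hsg2]; norm_num [Matrix.vecHead, Matrix.vecTail, g2, Matrix.cons_val_three, Matrix.cons_val_two]
  have v24 : b0 g2 g4 = 0 := by rw [bg4 g2 hsg2]; norm_num [Matrix.vecHead, Matrix.vecTail, g2, Matrix.cons_val_three, Matrix.cons_val_two]
  have v30 : b0 g3 g0 = 0 := by rw [bg0 g3 hsg3]; norm_num [Matrix.vecHead, Matrix.vecTail, g3, Matrix.cons_val_three, Matrix.cons_val_two]
  have v31 : b0 g3 g1 = 0 := by rw [bg1 g3 hsg3]; norm_num [Matrix.vecHead, Matrix.vecTail, g3, Matrix.cons_val_three, Matrix.cons_val_two]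
  have v32 : b0 g3 g2 = 0 := by rw [bg2 g3 hsg3]; norm_num [Matrix.vecHead, Matrix.vecTail, g3, Matrix.cons_val_three, Matrix.cons_val_two]
  have v33 : b0 g3 g3 = -2 := by rw [bg3 g3 hsg3]; norm_num [Matrix.vecHead, Matrix.vecTail, g3, Matrix.cons_val_three, Matrix.cons_val_two]
  have v34 : b0 g3 g4 = 0 := by rw [bg4 g3 hsg3]; norm_num [Matrix.vecHead, Matrix.vecTail, g3, Matrix.cons_val_three, Matrix.cons_val_two]
  have v40 : b0 g4 g0 = 0 := by rw [bg0 g4 hsg4]; norm_num [Matrix.vecHead, Matrix.vecTail, g4, Matrix.cons_val_three, Matrix.cons_val_two]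
  have v41 : b0 g4 g1 = 0 := by rw [bg1 g4 hsg4]; norm_num [Matrix.vecHead, Matrix.vecTail, g4, Matrix.cons_val_three, Matrix.cons_val_two]
  have v42 : b0 g4 g2 = 0 := by rw [bg2 g4 hsg4]; norm_num [Matrix.vecHead, Matrix.vecTail, g4, Matrix.cons_val_three, Matrix.cons_val_two]
  have v43 : b0 g4 g3 = 0 := by rw [bg3 g4 hsg4]; norm_num [Matrix.vecHead, Matrix.vecTail, g4, Matrix.cons_val_three, Matrix.cons_val_two]
  have v44 : b0 g4 g4 = -2 := by rw [bg4 g4 hsg4]; norm_num [Matrix.vecHead, Matrix.vecTail, g4, Matrix.cons_val_three, Matrix.cons_val_two]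
  constructor
  · intro M hMt h0 horth
    have hs := hskew_iff M hMt
    have hdiag : ∀ i, M i i = 0 := fun i => by have := hs i i; linarith
    have e1 : M 0 2 + M 1 3 = 0 := by have := h0; rw [bPsi M hs] at this; linarith
    have e0 : M 0 1 + M 2 3 = 0 := by
      have := horth g0 (skew_of g0 hsg0) hg0Psi; rwa [bg0 M hs] at this
    have e2 : M 0 3 + M 1 2 = 0 := by
      have := horth g1 (skew_of g1 hsg1) hg1Psi; rwa [bg1 M hs] at this
    have e3 : M 0 2 - M 1 3 = 0 := by
      have := horth g2 (skew_of g2 hsg2) hg2Psi; rwa [bg2 M hs] at this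
    have e4 : M 2 3 - M 0 1 = 0 := by
      have := horth g3 (skew_of g3 hsg3) hg3Psi; rwa [bg3 M hs] at this
    have e5 : M 1 2 - M 0 3 = 0 := by
      have := horth g4 (skew_of g4 hsg4) hg4Psi; rwa [bg4 M hs] at this
    ext i j
    fin_cases i <;> fin_cases j <;> simp <;>
      first
        | exact hdiag _
        | linarith [hs 0 1, hs 0 2, hs 0 3, hs 1 2, hs 1 3, hs 2 3]
  · refine ⟨![g0, g1, g2, g3, g4], ?_, ?_, ?_, ?_, ?_, ?_⟩
    · intro i
      fin_cases i
      · exact ⟨skew_of g0 hsg0, hg0Psi⟩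
      · exact ⟨skew_of g1 hsg1, hg1Psi⟩
      · exact ⟨skew_of g2 hsg2, hg2Psi⟩
      · exact ⟨skew_of g3 hsg3, hg3Psi⟩
      · exact ⟨skew_of g4 hsg4, hg4Psi⟩
    · rw [Fintype.linearIndependent_iff]
      intro c hc i
      have ent : ∀ a b : Fin 4, (∑ i, c i • ![g0, g1, g2, g3, g4] i) a b = 0 := by
        intro a b; rw [hc]; simp
      have h01 := ent 0 1
      have h03 := ent 0 3
      have h02 := ent 0 2
      have h23 := ent 2 3
      have h12 := ent 1 2
      simp [Fin.sum_univ_five, Matrix.sum_apply, g0, g1, g2, g3, g4, Matrix.vecHead, Matrix.vecTail] at h01 h03 h02 h23 h12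
      fin_cases i <;> simp <;> linarith
    · intro M hMt h0
      have hs := hskew_iff M hMt
      have hdiag : ∀ i, M i i = 0 := fun i => by have := hs i i; linarith
      have e1 : M 0 2 + M 1 3 = 0 := by have := h0; rw [bPsi M hs] at this; linarith
      have hM : M = ((M 0 1 + M 2 3)/2) • g0 + ((M 0 3 + M 1 2)/2) • g1 +
          (M 0 2) • g2 + ((M 0 1 - M 2 3)/2) • g3 + ((M 0 3 - M 1 2)/2) • g4 := by
        ext i j
        fin_cases i <;> fin_cases j <;>
          simp [g0, g1, g2, g3, g4, Matrix.vecHead, Matrix.vecTail] <;>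
          first
            | exact hdiag _
            | linarith [hs 0 1, hs 0 2, hs 0 3, hs 1 2, hs 1 3, hs 2 3]
      rw [hM]
      have mem : ∀ k : Fin 5, ![g0, g1, g2, g3, g4] k ∈
          Submodule.span ℝ (Set.range ![g0, g1, g2, g3, g4]) :=
        fun k => Submodule.subset_span ⟨k, rfl⟩
      exact Submodule.add_mem _ (Submodule.add_mem _ (Submodule.add_mem _
        (Submodule.add_mem _ (Submodule.smul_mem _ _ (mem 0))
          (Submodule.smul_mem _ _ (mem 1))) (Submodule.smul_mem _ _ (mem 2)))
        (Submodule.smul_mem _ _ (mem 3))) (Submodule.smul_mem _ _ (mem 4))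
    · intro i j hij
      fin_cases i <;> fin_cases j <;> simp_all
    · intro i hi
      fin_cases i <;> simp_all
    · intro i hi
      fin_cases i <;> simp_all
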